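/- Let V be a finite-dimensional real vector space, φ ∈ End(V), and 𝔤_φ = V ⋊ ℝ with bracket [(v,s),(w,t)]=(sφ(w)-tφ(v),0). Then for all (w,s),(v,t) ∈ 𝔤_φ with s ≠ 0: exp(ad(w,s))(v,t) = (exp(sφ)v - (t/s)(exp(sφ)w - w), t), where exp(sφ) is the matrix exponential. -/

import Mathlib

/-- The operator `ad(w,s)` on `𝔤_φ = V ⋊ ℝ`, sending `(v,t)` to `(s·φ(v) - t·φ(w), 0)`. -/
noncomputable def adSemidirect {V : Type*} [NormedAddCommGroup V] [NormedSpace ℝ V]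
    (φ : V →L[ℝ] V) (w : V) (s : ℝ) : (V × ℝ) →L[ℝ] (V × ℝ) :=
  ((s • φ.comp (ContinuousLinearMap.fst ℝ V ℝ)) -
    (ContinuousLinearMap.snd ℝ V ℝ).smulRight (φ w)).prod 0

lemma adSemidirect_apply {V : Type*} [NormedAddCommGroup V] [NormedSpace ℝ V]
    (φ : V →L[ℝ] V) (w : V) (s : ℝ) (v : V) (t : ℝ) :
    adSemidirect φ w s (v, t) = (s • φ v - t • φ w, 0) := rfl

lemma adSemidirect_pow_succ_apply {V : Type*} [NormedAddCommGroup V] [NormedSpace ℝ V]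
    (φ : V →L[ℝ] V) (w : V) (s : ℝ) (hs : s ≠ 0) (v : V) (t : ℝ) (n : ℕ) :
    ((adSemidirect φ w s) ^ (n + 1)) (v, t) =
      (((s • φ) ^ (n + 1)) (v - (t / s) • w), 0) := by
  induction n with
  | zero =>
      simp only [zero_add, pow_one, adSemidirect_apply, map_sub, map_smul,
        ContinuousLinearMap.smul_apply, smul_smul, div_mul_cancel₀ t hs]
  | succ n ih =>
      rw [pow_succ', ContinuousLinearMap.mul_apply, ih, adSemidirect_apply,
        pow_succ' (s • φ) (n + 1), ContinuousLinearMap.mul_apply]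
      simp [ContinuousLinearMap.smul_apply]

/-- Explicit formula for `exp(ad(w,s))` on `𝔤_φ = V ⋊ ℝ`. -/
theorem exp_adSemidirect_formula
    {V : Type*} [NormedAddCommGroup V] [NormedSpace ℝ V] [FiniteDimensional ℝ V]
    (φ : V →L[ℝ] V) (w : V) (s : ℝ) (hs : s ≠ 0) (v : V) (t : ℝ) :
    NormedSpace.exp (adSemidirect φ w s) (v, t) =
      (NormedSpace.exp (s • φ) v - (t / s) • (NormedSpace.exp (s • φ) w - w), t) := by
  have hA : HasSum
      (fun n : ℕ => (((n.factorial : ℝ)⁻¹) • (adSemidirect φ w s) ^ n) (v, t))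
      (NormedSpace.exp (adSemidirect φ w s) (v, t)) := by
    have := (NormedSpace.exp_series_hasSum_exp' (𝕂 := ℝ) (adSemidirect φ w s)).mapL
      (ContinuousLinearMap.apply ℝ (V × ℝ) (v, t))
    simpa using this
  have hB : HasSum (fun n : ℕ => ((n.factorial : ℝ)⁻¹) • ((s • φ) ^ n) (v - (t / s) • w))
      (NormedSpace.exp (s • φ) (v - (t / s) • w)) := by
    have := (NormedSpace.exp_series_hasSum_exp' (𝕂 := ℝ) (s • φ)).mapL
      (ContinuousLinearMap.apply ℝ V (v - (t / s) • w))
    exact this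
  have hB' : HasSum
      (fun n : ℕ => ((((n.factorial : ℝ)⁻¹) • ((s • φ) ^ n) (v - (t / s) • w), 0) : V × ℝ))
      ((NormedSpace.exp (s • φ) (v - (t / s) • w), 0) : V × ℝ) :=
    hB.mapL (ContinuousLinearMap.inl ℝ V ℝ)
  have hfg : ∀ n : ℕ, n ≠ 0 →
      (((n.factorial : ℝ)⁻¹) • (adSemidirect φ w s) ^ n) (v, t) =
        (((((n.factorial : ℝ)⁻¹) • ((s • φ) ^ n) (v - (t / s) • w), 0)) : V × ℝ) := by
    rintro (_ | n) h
    · exact absurd rfl h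
    · rw [ContinuousLinearMap.smul_apply, adSemidirect_pow_succ_apply φ w s hs v t n,
        Prod.smul_mk, smul_zero]
  have key : NormedSpace.exp (adSemidirect φ w s) (v, t) - ((v, t) : V × ℝ)
      = (NormedSpace.exp (s • φ) (v - (t / s) • w), 0) -
        ((v - (t / s) • w, 0) : V × ℝ) := by
    have h1 : HasSum (fun n : ℕ => (((n.factorial : ℝ)⁻¹) • (adSemidirect φ w s) ^ n) (v, t) -
        (if n = 0 then ((v, t) : V × ℝ) else 0))
        (NormedSpace.exp (adSemidirect φ w s) (v, t) - (v, t)) := by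
      simpa using hA.sub (hasSum_ite_eq 0 ((v, t) : V × ℝ))
    have h2 : HasSum (fun n : ℕ =>
        (((((n.factorial : ℝ)⁻¹) • ((s • φ) ^ n) (v - (t / s) • w), 0)) : V × ℝ) -
        (if n = 0 then ((v - (t / s) • w, 0) : V × ℝ) else 0))
        ((NormedSpace.exp (s • φ) (v - (t / s) • w), 0) -
          ((v - (t / s) • w, 0) : V × ℝ)) := by
      simpa using hB'.sub (hasSum_ite_eq 0 ((v - (t / s) • w, 0) : V × ℝ))
    have heq : (fun n : ℕ => (((n.factorial : ℝ)⁻¹) • (adSemidirect φ w s) ^ n) (v, t) -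
        (if n = 0 then ((v, t) : V × ℝ) else 0)) =
        (fun n : ℕ =>
          (((((n.factorial : ℝ)⁻¹) • ((s • φ) ^ n) (v - (t / s) • w), 0)) : V × ℝ) -
          (if n = 0 then ((v - (t / s) • w, 0) : V × ℝ) else 0)) := by
      funext n
      by_cases h : n = 0
      · subst h; simp [Prod.ext_iff]
      · simp [h, hfg n h]
    rw [heq] at h1
    exact h1.unique h2
  rw [sub_eq_iff_eq_add] at key
  rw [key, map_sub, map_smul]
  refine Prod.ext ?_ (by simp)
  simp only [Prod.fst_sub, Prod.fst_add, smul_sub]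
  abel
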